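/- arXiv:2109.04365 — 3 statements merged into one kernel-verified Lean document; each statement's English description precedes it below -/
import Mathlib

section
/- Let d ≥ 1 and m ≥ 2d - 1. Let B₀ ∈ ℂ^{(2d-1)×d} be the matrix whose first row is e₁ᵀ, whose rows 2,…,d are e₁ᵀ + e_kᵀ for k = 2,…,d, and whose rows d+1,…,2d-1 are e₁ᵀ + i·e_kᵀ for k = 2,…,d; extend to B ∈ ℂ^{m×d} by appending rows equal to e₁ᵀ. Then sign(B e₁) is the all-ones vector, and for any y ∈ ℂ^d with sign(By) = sign(B e₁), one has y = y₁ · e₁ with y₁ > 0. Hence e₁ ∈ W_B and Be₁ has no zero entry. -/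
noncomputable def csign (z : ℂ) : ℂ := if z = 0 then 0 else z / ((‖z‖ : ℝ) : ℂ)

def Wset {m d : ℕ} (B : Matrix (Fin m) (Fin d) ℂ) : Set (Fin d → ℂ) :=
  {x | ∀ y : Fin d → ℂ,
    (∀ j, csign (B.mulVec y j) = csign (B.mulVec x j)) →
      ∃ t : ℝ, 0 < t ∧ x = fun k => (t : ℂ) * y k}

lemma csign_one {z : ℂ} (h : csign z = 1) : 0 < z.re ∧ z.im = 0 := by
  unfold csign at h
  by_cases hz : z = 0
  · simp [hz] at h
  · rw [if_neg hz] at h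
    have habs : ((‖z‖ : ℝ) : ℂ) ≠ 0 := by
      simpa using hz
    have hz2 : z = ((‖z‖ : ℝ) : ℂ) := by
      rwa [div_eq_one_iff_eq habs] at h
    constructor
    · rw [hz2]; simpa using norm_pos_iff.mpr hz
    · rw [hz2]; simp

theorem stmt_10 (d m : ℕ) (hd : 0 < d) (hm : 2 * d - 1 ≤ m)
    (B : Matrix (Fin m) (Fin d) ℂ)
    (hB : ∀ (j : Fin m) (k : Fin d),
      B j k = (if k.val = 0 then 1 else 0)
        + (if 1 ≤ j.val ∧ j.val ≤ d - 1 ∧ k.val = j.val then 1 else 0)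
        + (if d ≤ j.val ∧ j.val ≤ 2 * d - 2 ∧ k.val = j.val - d + 1 then Complex.I else 0))
    (e₁ : Fin d → ℂ) (he₁ : e₁ = fun k => if k.val = 0 then 1 else 0) :
    (∀ j, B.mulVec e₁ j ≠ 0) ∧
    (∀ j, csign (B.mulVec e₁ j) = 1) ∧
    (∀ y : Fin d → ℂ,
      (∀ j, csign (B.mulVec y j) = csign (B.mulVec e₁ j)) →
        0 < (y ⟨0, hd⟩).re ∧ (y ⟨0, hd⟩).im = 0 ∧ y = fun k => y ⟨0, hd⟩ * e₁ k) ∧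
    e₁ ∈ Wset B := by
  -- key formula for mulVec
  have key : ∀ (y : Fin d → ℂ) (j : Fin m), B.mulVec y j =
      y ⟨0, hd⟩
      + (if h : 1 ≤ j.val ∧ j.val ≤ d - 1 then
          y ⟨j.val, lt_of_le_of_lt h.2 (Nat.sub_lt hd one_pos)⟩ else 0)
      + (if h : d ≤ j.val ∧ j.val ≤ 2 * d - 2 then
          Complex.I * y ⟨j.val - d + 1, by omega⟩ else 0) := by
    intro y j
    unfold Matrix.mulVec dotProduct
    simp_rw [hB, add_mul, Finset.sum_add_distrib]
    congr 1
    · congr 1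
      · rw [Finset.sum_eq_single (⟨0, hd⟩ : Fin d)]
        · simp
        · intro k _ hk
          have : k.val ≠ 0 := fun h => hk (Fin.ext h)
          simp [this]
        · simp
      · by_cases hj : 1 ≤ j.val ∧ j.val ≤ d - 1
        · rw [dif_pos hj,
            Finset.sum_eq_single (⟨j.val, lt_of_le_of_lt hj.2 (Nat.sub_lt hd one_pos)⟩ : Fin d)]
          · simp [hj.1, hj.2]
          · intro k _ hk
            have : k.val ≠ j.val := fun h => hk (Fin.ext h)
            simp [this]
          · simp
        · rw [dif_neg hj]
          apply Finset.sum_eq_zero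
          intro k _
          have : ¬ (1 ≤ j.val ∧ j.val ≤ d - 1 ∧ k.val = j.val) := by tauto
          simp [this]
    · by_cases hj : d ≤ j.val ∧ j.val ≤ 2 * d - 2
      · rw [dif_pos hj,
          Finset.sum_eq_single (⟨j.val - d + 1, by omega⟩ : Fin d)]
        · rw [if_pos (⟨hj.1, hj.2, rfl⟩ : d ≤ j.val ∧ j.val ≤ 2 * d - 2 ∧ _)]
        · intro k _ hk
          have : k.val ≠ j.val - d + 1 := fun h => hk (Fin.ext h)
          simp [this]
        · simp
      · rw [dif_neg hj]
        apply Finset.sum_eq_zero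
        intro k _
        have : ¬ (d ≤ j.val ∧ j.val ≤ 2 * d - 2 ∧ k.val = j.val - d + 1) := by tauto
        simp [this]
  have he1val : e₁ ⟨0, hd⟩ = 1 := by simp [he₁]
  have keyE : ∀ j : Fin m, B.mulVec e₁ j = 1 := by
    intro j
    rw [key]
    by_cases h1 : 1 ≤ j.val ∧ j.val ≤ d - 1
    · have : e₁ (⟨j.val, lt_of_le_of_lt h1.2 (Nat.sub_lt hd one_pos)⟩ : Fin d) = 0 := by
        simp only [he₁]; exact if_neg (by omega)
      by_cases h2 : d ≤ j.val ∧ j.val ≤ 2 * d - 2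
      · omega
      · rw [dif_pos h1, dif_neg h2, this, he1val]; ring
    · by_cases h2 : d ≤ j.val ∧ j.val ≤ 2 * d - 2
      · have : e₁ (⟨j.val - d + 1, by omega⟩ : Fin d) = 0 := by
          simp only [he₁]; exact if_neg (by omega)
        rw [dif_neg h1, dif_pos h2, this, he1val]; ring
      · rw [dif_neg h1, dif_neg h2, he1val]; ring
  have hsignE : ∀ j : Fin m, csign (B.mulVec e₁ j) = 1 := by
    intro j; rw [keyE]; unfold csign; norm_num
  have main : ∀ y : Fin d → ℂ,
      (∀ j, csign (B.mulVec y j) = csign (B.mulVec e₁ j)) →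
        0 < (y ⟨0, hd⟩).re ∧ (y ⟨0, hd⟩).im = 0 ∧ y = fun k => y ⟨0, hd⟩ * e₁ k := by
    intro y hy
    have hy1 : ∀ j, csign (B.mulVec y j) = 1 := fun j => (hy j).trans (hsignE j)
    have hpos : ∀ j, 0 < (B.mulVec y j).re ∧ (B.mulVec y j).im = 0 :=
      fun j => csign_one (hy1 j)
    have hm0 : 0 < m := by omega
    -- row 0
    have row0 : B.mulVec y ⟨0, hm0⟩ = y ⟨0, hd⟩ := by
      rw [key]
      rw [dif_neg (by simp only [Fin.val_mk]; omega), dif_neg (by simp only [Fin.val_mk]; omega)]; ring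
    have h0 := hpos ⟨0, hm0⟩
    rw [row0] at h0
    -- for each k ≠ 0: y k = 0
    have hzero : ∀ k : Fin d, k.val ≠ 0 → y k = 0 := by
      intro k hk
      have hk1 : 1 ≤ k.val := by omega
      have hkd : k.val ≤ d - 1 := by omega
      have hrow1 : (k.val : ℕ) < m := by omega
      have hA := hpos ⟨k.val, hrow1⟩
      rw [key] at hA
      rw [dif_pos (by simp only [Fin.val_mk]; omega), dif_neg (by simp only [Fin.val_mk]; omega)] at hA
      have hkk : (⟨(⟨k.val, hrow1⟩ : Fin m).val,
          lt_of_le_of_lt (by simp only [Fin.val_mk]; omega) (Nat.sub_lt hd one_pos)⟩ : Fin d) = k :=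
        Fin.ext rfl
      rw [hkk] at hA
      have him : (y k).im = 0 := by
        have := hA.2
        simp [Complex.add_im, h0.2] at this
        linarith [this]
      have hrow2 : d + k.val - 1 < m := by omega
      have hB2 := hpos ⟨d + k.val - 1, hrow2⟩
      rw [key] at hB2
      rw [dif_neg (by simp only [Fin.val_mk]; omega), dif_pos (by simp only [Fin.val_mk]; omega)] at hB2
      have hkk2 : (⟨(⟨d + k.val - 1, hrow2⟩ : Fin m).val - d + 1,
          by simp only [Fin.val_mk]; omega⟩ : Fin d) = k :=
        Fin.ext (by simp only [Fin.val_mk]; omega)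
      rw [hkk2] at hB2
      have hre : (y k).re = 0 := by
        have := hB2.2
        simp [Complex.add_im, Complex.mul_im, h0.2, Complex.I_re, Complex.I_im] at this
        linarith [this]
      exact Complex.ext hre him
    refine ⟨h0.1, h0.2, ?_⟩
    funext k
    by_cases hk : k.val = 0
    · have : k = (⟨0, hd⟩ : Fin d) := Fin.ext hk
      rw [this]
      simp [he₁]
    · rw [hzero k hk]
      simp [he₁, hk]
  refine ⟨fun j => by rw [keyE]; norm_num, hsignE, main, ?_⟩
  intro y hy
  obtain ⟨hre, him, hyeq⟩ := main y hy
  set r := (y ⟨0, hd⟩).re with hr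
  refine ⟨1 / r, by positivity, ?_⟩
  funext k
  have hval : y ⟨0, hd⟩ = (r : ℂ) := Complex.ext (by simp [hr]) (by simp [him])
  have hyk := congrFun hyeq k
  rw [hval] at hyk
  rw [hyk]
  have hne : ((r : ℝ) : ℂ) ≠ 0 := by exact_mod_cast hre.ne'
  push_cast
  rw [← mul_assoc, one_div, inv_mul_cancel₀ hne, one_mul]
end

section
/- Every complex number a is uniquely determined by the triple (sign(a), sign(a+1), sign(a+i)). Equivalently, if a, b ∈ ℂ satisfy sign(a) = sign(b), sign(a+1) = sign(b+1), and sign(a+i) = sign(b+i), then a = b. -/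
lemma csign_eq_zero_iff (z : ℂ) : csign z = 0 ↔ z = 0 := by
  unfold csign
  split
  · simp_all
  · next hz =>
    simp only [div_eq_zero_iff]
    constructor
    · rintro (h | h)
      · exact h
      · exact absurd (by exact_mod_cast h) (norm_ne_zero_iff.mpr hz)
    · intro h; exact absurd h hz

lemma csign_factor {a b : ℂ} (ha : a ≠ 0) (hb : b ≠ 0) (h : csign a = csign b) :
    ∃ s : ℝ, 0 < s ∧ b = (s : ℂ) * a := by
  unfold csign at h
  rw [if_neg ha, if_neg hb] at h
  refine ⟨‖b‖ / ‖a‖,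
    div_pos (norm_pos_iff.mpr hb) (norm_pos_iff.mpr ha), ?_⟩
  have ha' : ((‖a‖ : ℝ) : ℂ) ≠ 0 := by
    exact_mod_cast (norm_ne_zero_iff.mpr ha)
  have hb' : ((‖b‖ : ℝ) : ℂ) ≠ 0 := by
    exact_mod_cast (norm_ne_zero_iff.mpr hb)
  push_cast
  field_simp at h ⊢
  linear_combination -h

theorem stmt_13 (a b : ℂ) (h1 : csign a = csign b)
    (h2 : csign (a + 1) = csign (b + 1))
    (h3 : csign (a + Complex.I) = csign (b + Complex.I)) : a = b := by
  by_cases ha : a = 0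
  · have hb : b = 0 := by
      rw [← csign_eq_zero_iff b, ← h1]
      exact (csign_eq_zero_iff a).2 ha
    rw [ha, hb]
  by_cases hb : b = 0
  · exact absurd ((csign_eq_zero_iff a).1 (h1.trans ((csign_eq_zero_iff b).2 hb))) ha
  by_cases ha1 : a + 1 = 0
  · have hb1 : b + 1 = 0 := by
      rw [← csign_eq_zero_iff, ← h2]
      exact (csign_eq_zero_iff _).2 ha1
    linear_combination ha1 - hb1
  by_cases hb1 : b + 1 = 0
  · exact absurd ((csign_eq_zero_iff _).1 (h2.trans ((csign_eq_zero_iff _).2 hb1))) ha1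
  by_cases hai : a + Complex.I = 0
  · have hbi : b + Complex.I = 0 := by
      rw [← csign_eq_zero_iff, ← h3]
      exact (csign_eq_zero_iff _).2 hai
    linear_combination hai - hbi
  by_cases hbi : b + Complex.I = 0
  · exact absurd ((csign_eq_zero_iff _).1 (h3.trans ((csign_eq_zero_iff _).2 hbi))) hai
  obtain ⟨s, hs, hsb⟩ := csign_factor ha hb h1
  obtain ⟨t, ht, htb⟩ := csign_factor ha1 hb1 h2
  obtain ⟨u, hu, hub⟩ := csign_factor hai hbi h3
  have e1 : ((s : ℂ) - t) * a = (t : ℂ) - 1 := by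
    have : (s : ℂ) * a + 1 = (t : ℂ) * (a + 1) := by rw [← hsb, ← htb]
    linear_combination this
  have e2 : ((s : ℂ) - u) * a = ((u : ℂ) - 1) * Complex.I := by
    have : (s : ℂ) * a + Complex.I = (u : ℂ) * (a + Complex.I) := by
      rw [← hsb, ← hub]
    linear_combination this
  rw [Complex.ext_iff] at e1 e2
  simp only [Complex.mul_re, Complex.mul_im, Complex.sub_re, Complex.sub_im,
    Complex.ofReal_re, Complex.ofReal_im, Complex.I_re, Complex.I_im,
    Complex.one_re, Complex.one_im] at e1 e2
  obtain ⟨e1r, e1i⟩ := e1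
  obtain ⟨e2r, e2i⟩ := e2
  have hane : a.re ≠ 0 ∨ a.im ≠ 0 := by
    by_contra h
    push_neg at h
    exact ha (Complex.ext h.1 h.2)
  have hs1 : s = 1 := by
    rcases hane with hx | hy
    · -- use e2 : (s-u)*a.re ... = 0 and (s-u)*a.im + ... = u - 1
      have hsu : s = u := by
        by_contra hne
        apply hx
        have h0 : (s - u) * a.re = 0 := by linarith [e2r]
        rcases mul_eq_zero.1 h0 with h | h
        · exact absurd (by linarith : s = u) hne
        · exact h
      nlinarith [e2i, e2r, hsu]
    · have hst : s = t := by
        by_contra hne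
        apply hy
        have h0 : (s - t) * a.im = 0 := by linarith [e1i]
        rcases mul_eq_zero.1 h0 with h | h
        · exact absurd (by linarith : s = t) hne
        · exact h
      nlinarith [e1r, hst]
  rw [hsb, hs1]
  simp
end

section
/- For every d ≥ 1 there exists an affine measurement scheme with 3d measurements recovering every x ∈ ℂ^d exactly: namely, there exist A ∈ ℂ^{3d×d} and b ∈ ℂ^{3d} (giving the measurements sign(x_k), sign(x_k+1), sign(x_k+i) for k ∈ [d]) such that for all x, y ∈ ℂ^d, sign(Ax + b) = sign(Ay + b) implies x = y. -/
lemma csign_scale (z w : ℂ) (hz : z ≠ 0) (hw : w ≠ 0) (h : csign z = csign w) :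
    ∃ t : ℝ, 0 < t ∧ w = (t : ℂ) * z := by
  unfold csign at h
  rw [if_neg hz, if_neg hw] at h
  refine ⟨‖w‖ / ‖z‖, div_pos (norm_pos_iff.mpr hw) (norm_pos_iff.mpr hz), ?_⟩
  have h1 : ((‖z‖ : ℝ) : ℂ) ≠ 0 := by simp [norm_ne_zero_iff.mpr hz]
  have h2 : ((‖w‖ : ℝ) : ℂ) ≠ 0 := by simp [norm_ne_zero_iff.mpr hw]
  push_cast
  field_simp at h ⊢
  linear_combination -h

lemma key (z w : ℂ) (h0 : csign z = csign w) (h1 : csign (z + 1) = csign (w + 1))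
    (h2 : csign (z + Complex.I) = csign (w + Complex.I)) : z = w := by
  by_cases hz : z = 0
  · subst hz
    have : w = 0 := by rwa [show csign 0 = 0 by simp [csign], eq_comm, csign_eq_zero_iff] at h0
    simp [this]
  by_cases hw : w = 0
  · exact absurd (h0.trans (by simp [hw, csign])) ((not_iff_not.2 (csign_eq_zero_iff z)).2 hz)
  by_cases hz1 : z + 1 = 0
  · have : w + 1 = 0 := by rwa [hz1, show csign 0 = 0 by simp [csign], eq_comm, csign_eq_zero_iff] at h1
    linear_combination hz1 - this
  by_cases hw1 : w + 1 = 0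
  · exact absurd (h1.trans (by simp [hw1, csign])) ((not_iff_not.2 (csign_eq_zero_iff _)).2 hz1)
  by_cases hzI : z + Complex.I = 0
  · have : w + Complex.I = 0 := by rwa [hzI, show csign 0 = 0 by simp [csign], eq_comm, csign_eq_zero_iff] at h2
    linear_combination hzI - this
  by_cases hwI : w + Complex.I = 0
  · exact absurd (h2.trans (by simp [hwI, csign])) ((not_iff_not.2 (csign_eq_zero_iff _)).2 hzI)
  obtain ⟨t, ht, hwt⟩ := csign_scale z w hz hw h0
  obtain ⟨s, hs, hws⟩ := csign_scale _ _ hz1 hw1 h1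
  obtain ⟨r, hr, hwr⟩ := csign_scale _ _ hzI hwI h2
  -- derive real equations
  have eq1 : (t : ℂ) * z + 1 = (s : ℂ) * (z + 1) := by linear_combination hws - hwt
  have eq2 : (t : ℂ) * z + Complex.I = (r : ℂ) * (z + Complex.I) := by linear_combination hwr - hwt
  have e1re := congrArg Complex.re eq1
  have e1im := congrArg Complex.im eq1
  have e2re := congrArg Complex.re eq2
  have e2im := congrArg Complex.im eq2
  simp [Complex.add_re, Complex.add_im, Complex.mul_re, Complex.mul_im] at e1re e1im e2re e2im
  have hzne : z.re ≠ 0 ∨ z.im ≠ 0 := by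
    by_contra hc
    push_neg at hc
    exact hz (Complex.ext hc.1 hc.2)
  have ht1 : t = 1 := by
    rcases hzne with h | h
    · have hrt : t = r := e2re.resolve_right h
      linear_combination (1 + z.im) * hrt - e2im
    · have hst : t = s := e1im.resolve_right h
      linear_combination (1 + z.re) * hst - e1re
  rw [hwt, ht1]
  simp

theorem stmt_14 (d : ℕ) (hd : 1 ≤ d) :
    ∃ (A : Matrix (Fin (3 * d)) (Fin d) ℂ) (b : Fin (3 * d) → ℂ),
      ∀ x y : Fin d → ℂ,
        (∀ j, csign (A.mulVec x j + b j) = csign (A.mulVec y j + b j)) → x = y := by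
  have hd0 : 0 < d := hd
  refine ⟨fun j k => if (k : ℕ) = (j : ℕ) % d then 1 else 0,
    fun j => if (j : ℕ) < d then 0 else if (j : ℕ) < 2 * d then 1 else Complex.I, ?_⟩
  intro x y h
  have hm : ∀ (j : Fin (3 * d)) (x : Fin d → ℂ),
      Matrix.mulVec (fun (j : Fin (3*d)) (k : Fin d) => if (k : ℕ) = (j : ℕ) % d then (1:ℂ) else 0) x j
        = x ⟨(j : ℕ) % d, Nat.mod_lt _ hd0⟩ := by
    intro j x
    simp only [Matrix.mulVec, dotProduct, ite_mul, one_mul, zero_mul]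
    rw [show (fun k : Fin d => if (k : ℕ) = (j : ℕ) % d then x k else 0)
        = fun k : Fin d => if k = ⟨(j : ℕ) % d, Nat.mod_lt _ hd0⟩ then x k else 0 by
      funext k; congr 1; simp [Fin.ext_iff]]
    simp
  funext k
  have hk3 : (k : ℕ) < 3 * d := by omega
  have hk3' : (k : ℕ) + d < 3 * d := by omega
  have hk3'' : (k : ℕ) + 2 * d < 3 * d := by omega
  have h0 := h ⟨k, hk3⟩
  have h1 := h ⟨(k : ℕ) + d, hk3'⟩
  have h2 := h ⟨(k : ℕ) + 2 * d, hk3''⟩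
  rw [hm, hm] at h0 h1 h2
  have m0 : (k : ℕ) % d = (k : ℕ) := Nat.mod_eq_of_lt k.isLt
  have m1 : ((k : ℕ) + d) % d = (k : ℕ) := by rw [Nat.add_mod_right]; exact m0
  have m2 : ((k : ℕ) + 2 * d) % d = (k : ℕ) := by rw [two_mul, ← add_assoc, Nat.add_mod_right, Nat.add_mod_right]; exact m0
  simp only [m0, m1, m2] at h0 h1 h2
  have b0 : ((k:ℕ) < d) := k.isLt
  have nb1 : ¬ ((k:ℕ) + d < d) := by omega
  have b1 : ((k:ℕ) + d < 2 * d) := by omega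
  have nb2 : ¬ ((k:ℕ) + 2*d < d) := by omega
  have nb2' : ¬ ((k:ℕ) + 2*d < 2*d) := by omega
  simp only [if_pos b0, if_neg nb1, if_pos b1, if_neg nb2, if_neg nb2'] at h0 h1 h2
  have hx : x ⟨(k:ℕ), k.isLt⟩ = x k := by congr
  have hy : y ⟨(k:ℕ), k.isLt⟩ = y k := by congr
  simp only [hx, hy, add_zero] at h0 h1 h2
  exact key _ _ h0 h1 h2
end
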